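/- Let m and u be integers with 1 < u ≤ m, and let Λ = {0, m} ∪ {n ∈ ℕ : n ≥ m+u}, which is a numerical semigroup of rank 2 with conductor c = m+u. Then an integer λ with c ≤ λ < c+m is an order-0 seed of Λ if and only if λ ≠ 2m, and every integer λ with c ≤ λ < c+u is an order-1 seed of Λ. -/
import Mathlib


/-- A numerical semigroup: a cofinite submonoid of ℕ, viewed as a set of naturals. -/
def IsNumericalSemigroup (S : Set ℕ) : Prop :=
  0 ∈ S ∧ (∀ a ∈ S, ∀ b ∈ S, a + b ∈ S) ∧ ∃ N : ℕ, ∀ n : ℕ, N ≤ n → n ∈ S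

/-- The conductor: the smallest `N` such that every `n ≥ N` belongs to `S`. -/
noncomputable def sgConductor (S : Set ℕ) : ℕ :=
  sInf {N : ℕ | ∀ n : ℕ, N ≤ n → n ∈ S}

/-- The genus: the number of gaps. -/
noncomputable def sgGenus (S : Set ℕ) : ℕ :=
  Sᶜ.ncard

/-- The rank `k(Λ) = c(Λ) - g(Λ)`. -/
noncomputable def sgRank (S : Set ℕ) : ℕ :=
  sgConductor S - sgGenus S

/-- The multiplicity: the smallest nonzero element. -/
noncomputable def sgMultiplicity (S : Set ℕ) : ℕ :=
  sInf {n : ℕ | n ∈ S ∧ n ≠ 0}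

/-- The Frobenius number: the largest gap, i.e. the conductor minus one. -/
noncomputable def sgFrobenius (S : Set ℕ) : ℕ :=
  sgConductor S - 1

/-- `sgElem S j` is the element `λ_j` of `S = {λ_0 = 0 < λ_1 < λ_2 < ⋯}`. -/
noncomputable def sgElem (S : Set ℕ) (j : ℕ) : ℕ :=
  Nat.nth (· ∈ S) j

/-- The jump `u_j = λ_{j+1} - λ_j`. -/
noncomputable def sgJump (S : Set ℕ) (j : ℕ) : ℕ :=
  sgElem S (j + 1) - sgElem S j

/-- The left elements: elements of `S` smaller than the Frobenius number. -/
def sgLeftElements (S : Set ℕ) : Set ℕ :=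
  {x : ℕ | x ∈ S ∧ x + 1 < sgConductor S}

/-- A minimal generator: a nonzero element not the sum of two nonzero elements. -/
def IsMinimalGenerator (S : Set ℕ) (x : ℕ) : Prop :=
  x ∈ S ∧ x ≠ 0 ∧ ¬ ∃ a ∈ S, ∃ b ∈ S, a ≠ 0 ∧ b ≠ 0 ∧ a + b = x

/-- A right generator: a minimal generator larger than the Frobenius number. -/
def IsRightGenerator (S : Set ℕ) (x : ℕ) : Prop :=
  IsMinimalGenerator S x ∧ sgFrobenius S < x

/-- A strong generator: a right generator `μ` such that `μ + m(Λ)` is a minimal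
generator of `Λ ∖ {μ}`. -/
noncomputable def IsStrongGenerator (S : Set ℕ) (x : ℕ) : Prop :=
  IsRightGenerator S x ∧ IsMinimalGenerator (S \ {x}) (x + sgMultiplicity S)

/-- A new generator of `Λ`: a minimal generator of `Λ` that is not a minimal
generator of `Λ ∪ {F(Λ)}`. -/
noncomputable def IsNewGenerator (S : Set ℕ) (x : ℕ) : Prop :=
  IsMinimalGenerator S x ∧ ¬ IsMinimalGenerator (S ∪ {sgFrobenius S}) x

/-- `x` (an element `λ_s ≥ c(Λ)`) is an order-`p` seed of `Λ` if
`x + λ_p ≠ λ_i + λ_j` for all `p < i ≤ j < s`, i.e. for all `i ≤ j` with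
`p < i` and `λ_j < x`. -/
noncomputable def IsSeed (S : Set ℕ) (p x : ℕ) : Prop :=
  sgConductor S ≤ x ∧ ∀ i j : ℕ, p < i → i ≤ j → sgElem S j < x →
    x + sgElem S p ≠ sgElem S i + sgElem S j

/-- `T` is a child of `S`: obtained by removing one right generator. -/
def IsChild (T S : Set ℕ) : Prop :=
  ∃ μ : ℕ, IsRightGenerator S μ ∧ T = S \ {μ}

/-- A grandchild: a child of a child. -/
def IsGrandchild (T S : Set ℕ) : Prop :=
  ∃ C : Set ℕ, IsChild C S ∧ IsChild T C

/-- A great-grandchild: a child of a grandchild. -/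
def IsGreatGrandchild (T S : Set ℕ) : Prop :=
  ∃ C : Set ℕ, IsGrandchild C S ∧ IsChild T C

/-- `⟨a,b,c,…⟩|_κ`: the smallest numerical semigroup containing a given set. -/
def sgClosure (A : Set ℕ) : Set ℕ :=
  ⋂₀ {S : Set ℕ | IsNumericalSemigroup S ∧ A ⊆ S}


theorem statement3 (m u : ℕ) (hu : 1 < u) (hum : u ≤ m)
    (S : Set ℕ) (hSdef : S = ({0, m} : Set ℕ) ∪ {n : ℕ | m + u ≤ n}) :
    IsNumericalSemigroup S ∧ sgRank S = 2 ∧ sgConductor S = m + u ∧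
    (∀ l : ℕ, m + u ≤ l → l < m + u + m → (IsSeed S 0 l ↔ l ≠ 2 * m)) ∧
    (∀ l : ℕ, m + u ≤ l → l < m + u + u → IsSeed S 1 l) := by
  
  have hm2 : 2 ≤ m := by omega
  have hmem : ∀ n : ℕ, n ∈ S ↔ n = 0 ∨ n = m ∨ m + u ≤ n := by
    intro n
    simp only [hSdef, Set.mem_union, Set.mem_insert_iff, Set.mem_singleton_iff, Set.mem_setOf_eq]
    tauto
  have h0S : (0 : ℕ) ∈ S := (hmem 0).mpr (Or.inl rfl)
  have hmS : m ∈ S := (hmem m).mpr (Or.inr (Or.inl rfl))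
  have hNS : IsNumericalSemigroup S := by
    refine ⟨h0S, ?_, m + u, fun n hn => (hmem n).mpr (Or.inr (Or.inr hn))⟩
    intro a ha b hb
    rw [hmem] at ha hb ⊢
    omega
  have hcond : sgConductor S = m + u := by
    have hmem' : (m + u) ∈ {N : ℕ | ∀ n : ℕ, N ≤ n → n ∈ S} :=
      fun n hn => (hmem n).mpr (Or.inr (Or.inr hn))
    refine le_antisymm (Nat.sInf_le hmem') (le_csInf ⟨_, hmem'⟩ ?_)
    intro N hN
    by_contra h
    have : m + u - 1 ∈ S := hN _ (by omega)
    rw [hmem] at this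
    omega
  have hgenus : sgGenus S = m + u - 2 := by
    have : Sᶜ = ((Finset.range (m + u)) \ {0, m} : Finset ℕ) := by
      ext n
      simp only [Set.mem_compl_iff, hmem, Finset.coe_sdiff, Set.mem_diff,
        Finset.coe_range, Set.mem_Iio, Finset.coe_insert, Finset.coe_singleton,
        Set.mem_insert_iff, Set.mem_singleton_iff]
      omega
    rw [sgGenus, this, Set.ncard_coe_finset, Finset.card_sdiff_of_subset]
    · have : ({0, m} : Finset ℕ).card = 2 := by
        rw [Finset.card_insert_of_notMem (by simp; omega), Finset.card_singleton]
      rw [this, Finset.card_range]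
    · intro x hx
      simp only [Finset.mem_insert, Finset.mem_singleton] at hx
      simp only [Finset.mem_range]
      omega
  have hrank : sgRank S = 2 := by
    rw [sgRank, hcond, hgenus]; omega
  have hinf : S.Infinite := by
    exact (Set.Ici_infinite (m + u)).mono (fun n hn => (hmem n).mpr (Or.inr (Or.inr hn)))
  have hinf' : {n : ℕ | n ∈ S}.Infinite := hinf
  have helem0 : sgElem S 0 = 0 := Nat.nth_zero_of_zero h0S
  have hmono : StrictMono (sgElem S) := Nat.nth_strictMono hinf'
  have helemS : ∀ j, sgElem S j ∈ S := fun j => Nat.nth_mem_of_infinite hinf' j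
  have helem1 : sgElem S 1 = m := by
    obtain ⟨k, hk⟩ := Nat.subset_range_nth (p := (· ∈ S)) hmS
    have hk1 : 1 ≤ k := by
      rcases Nat.eq_zero_or_pos k with h | h
      · exfalso
        rw [h] at hk
        have : sgElem S 0 = m := hk
        rw [helem0] at this
        omega
      · exact h
    have h1 : sgElem S 1 ≤ m := hk ▸ hmono.monotone hk1
    have h2 : sgElem S 1 ∈ S := helemS 1
    have h3 : 0 < sgElem S 1 := helem0 ▸ hmono Nat.zero_lt_one
    rw [hmem] at h2
    omega
  refine ⟨hNS, hrank, hcond, ?_, ?_⟩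
  · intro l hl1 hl2
    constructor
    · intro ⟨_, h⟩
      intro hl2m
      subst hl2m
      have hml : m < 2 * m := by omega
      exact h 1 1 Nat.zero_lt_one (le_refl 1) (helem1 ▸ hml)
        (by rw [helem0, helem1]; omega)
    · intro hne
      refine ⟨hcond ▸ hl1, ?_⟩
      intro i j hi hij hjl heq
      have hiS := helemS i
      have hjS := helemS j
      rw [hmem] at hiS hjS
      have h1 : m ≤ sgElem S i := helem1 ▸ hmono.monotone hi
      have h2 : sgElem S i ≤ sgElem S j := hmono.monotone hij
      rw [helem0] at heq
      omega
  · intro l hl1 hl2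
    refine ⟨hcond ▸ hl1, ?_⟩
    intro i j hi hij hjl heq
    have hiS := helemS i
    have hjS := helemS j
    rw [hmem] at hiS hjS
    have h1 : m < sgElem S i := helem1 ▸ hmono hi
    have h2 : sgElem S i ≤ sgElem S j := hmono.monotone hij
    rw [helem1] at heq
    omega
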